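/- With the perforated-domain setup below, define for ε > 0 the hole boundaries Σ_ε = ⋃_{i ∈ I_ε} ε·(i + ∂B), where ∂B is the topological boundary of B, and let H^{d−1} denote the (d−1)-dimensional Hausdorff measure on ℝ^d. Assume the unit-cell trace inequality: there exists c₀ > 0 such that for every continuously differentiable function v : ℝ^d → ℝ, ∫_{∂B} |v|² dH^{d−1} ≤ c₀ ( ∫_Y |v|² dx + ∫_Y |∇v|² dx ). Then for every ε > 0 and every continuously differentiable function u : ℝ^d → ℝ, ∫_{Σ_ε} |u|² dH^{d−1} ≤ c₀ ( ε^{−1} ∫_{Ω_ε} |u|² dx + ε ∫_{Ω_ε} |∇u|² dx ). -/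

import Mathlib

open MeasureTheory Filter Topology

noncomputable section

/-- The closed unit cube `[0,1]^d` in `ℝ^d`. -/
def closedUnitCube (d : ℕ) : Set (EuclideanSpace ℝ (Fin d)) :=
  WithLp.ofLp ⁻¹' (Set.univ.pi fun _ => Set.Icc (0 : ℝ) 1)

/-- The open unit cube `(0,1)^d` in `ℝ^d`. -/
def openUnitCube (d : ℕ) : Set (EuclideanSpace ℝ (Fin d)) :=
  WithLp.ofLp ⁻¹' (Set.univ.pi fun _ => Set.Ioo (0 : ℝ) 1)

/-- The integer vector `i ∈ ℤ^d` viewed as a point of `ℝ^d`. -/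
def intVec {d : ℕ} (i : Fin d → ℤ) : EuclideanSpace ℝ (Fin d) :=
  WithLp.toLp 2 (fun t => (i t : ℝ))

/-- The set `ε · (i + S)` for `S ⊆ ℝ^d`, `i ∈ ℤ^d`, `ε > 0`. -/
def epsCell {d : ℕ} (ε : ℝ) (i : Fin d → ℤ) (S : Set (EuclideanSpace ℝ (Fin d))) :
    Set (EuclideanSpace ℝ (Fin d)) :=
  (fun y => ε • (intVec i + y)) '' S

/-- The index set `I_ε = { i ∈ ℤ^d : ε·(i + [0,1]^d) ⊆ Ω }`. -/
def indexSet {d : ℕ} (Ω : Set (EuclideanSpace ℝ (Fin d))) (ε : ℝ) : Set (Fin d → ℤ) :=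
  {i | epsCell ε i (closedUnitCube d) ⊆ Ω}

/-- The perforated domain `Ω_ε = Ω \ ⋃_{i ∈ I_ε} ε·(i + B)`. -/
def perfDomain {d : ℕ} (Ω B : Set (EuclideanSpace ℝ (Fin d))) (ε : ℝ) :
    Set (EuclideanSpace ℝ (Fin d)) :=
  Ω \ ⋃ i ∈ indexSet Ω ε, epsCell ε i B

/-- The perforated periodicity cell `Y = (0,1)^d \ B`. -/
def perfCell {d : ℕ} (B : Set (EuclideanSpace ℝ (Fin d))) :
    Set (EuclideanSpace ℝ (Fin d)) :=
  openUnitCube d \ B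

/-- The hole boundaries `Σ_ε = ⋃_{i ∈ I_ε} ε·(i + ∂B)`. -/
def holeBoundaries {d : ℕ} (Ω B : Set (EuclideanSpace ℝ (Fin d))) (ε : ℝ) :
    Set (EuclideanSpace ℝ (Fin d)) :=
  ⋃ i ∈ indexSet Ω ε, epsCell ε i (frontier B)

open Set Pointwise InnerProductSpace
open scoped NNReal ENNReal

namespace RT

open Set Pointwise InnerProductSpace
open scoped NNReal ENNReal

variable {d : ℕ}

def cellMap (ε : ℝ) (i : Fin d → ℤ) :
    EuclideanSpace ℝ (Fin d) → EuclideanSpace ℝ (Fin d) :=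
  fun y => ε • (intVec i + y)

lemma epsCell_eq (ε : ℝ) (i : Fin d → ℤ) (S : Set (EuclideanSpace ℝ (Fin d))) :
    epsCell ε i S = cellMap ε i '' S := rfl

lemma epsCell_eq_smul_vadd (ε : ℝ) (i : Fin d → ℤ) (S : Set (EuclideanSpace ℝ (Fin d))) :
    epsCell ε i S = ε • (intVec i +ᵥ S) := by
  rw [epsCell, ← Set.image_vadd, ← Set.image_smul, Set.image_image]
  rfl

lemma cellMap_homeomorph {ε : ℝ} (hε : ε ≠ 0) (i : Fin d → ℤ) :
    ∃ h : EuclideanSpace ℝ (Fin d) ≃ₜ EuclideanSpace ℝ (Fin d), ⇑h = cellMap ε i :=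
  ⟨(Homeomorph.addLeft (intVec i)).trans (Homeomorph.smulOfNeZero ε hε), rfl⟩

lemma cellMap_measurableEmbedding {ε : ℝ} (hε : ε ≠ 0) (i : Fin d → ℤ) :
    MeasurableEmbedding (cellMap ε i) := by
  obtain ⟨h, hh⟩ := cellMap_homeomorph hε i
  exact hh ▸ h.measurableEmbedding

lemma cellMap_surjective {ε : ℝ} (hε : ε ≠ 0) (i : Fin d → ℤ) :
    Function.Surjective (cellMap ε i) := by
  obtain ⟨h, hh⟩ := cellMap_homeomorph hε i
  exact hh ▸ h.surjective

lemma cellMap_injective {ε : ℝ} (hε : ε ≠ 0) (i : Fin d → ℤ) :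
    Function.Injective (cellMap ε i) := by
  obtain ⟨h, hh⟩ := cellMap_homeomorph hε i
  exact hh ▸ h.injective

lemma hausdorff_epsCell {ε : ℝ} (hε : 0 < ε) (i : Fin d → ℤ) {r : ℝ} (hr : 0 ≤ r)
    (A : Set (EuclideanSpace ℝ (Fin d))) :
    μH[r] (epsCell ε i A) = ((‖ε‖₊ ^ r : ℝ≥0) : ℝ≥0∞) * μH[r] A := by
  rw [epsCell_eq_smul_vadd, Measure.hausdorffMeasure_smul₀ hr hε.ne' _,
    MeasureTheory.hausdorffMeasure_vadd _ (Or.inl hr)]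
  rfl

lemma volume_epsCell {ε : ℝ} (hε : 0 < ε) (i : Fin d → ℤ)
    (A : Set (EuclideanSpace ℝ (Fin d))) :
    volume (epsCell ε i A) = ENNReal.ofReal (ε ^ d) * volume A := by
  rw [epsCell_eq_smul_vadd, Measure.addHaar_smul_of_nonneg volume hε.le,
    finrank_euclideanSpace_fin, measure_vadd (μ := volume)]

lemma setIntegral_image_aux (μ : Measure (EuclideanSpace ℝ (Fin d)))
    {T : EuclideanSpace ℝ (Fin d) → EuclideanSpace ℝ (Fin d)}
    (hT : MeasurableEmbedding T) (hTsurj : Function.Surjective T)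
    {κ : ℝ≥0∞} (hκ : ∀ A : Set (EuclideanSpace ℝ (Fin d)), μ (T '' A) = κ * μ A)
    (S : Set (EuclideanSpace ℝ (Fin d)))
    (g : EuclideanSpace ℝ (Fin d) → ℝ) :
    ∫ x in T '' S, g x ∂μ = κ.toReal * ∫ y in S, g (T y) ∂μ := by
  have hres : μ.restrict (T '' S) = κ • Measure.map T (μ.restrict S) := by
    ext A hA
    rw [Measure.restrict_apply hA, Measure.smul_apply,
      Measure.map_apply hT.measurable hA, Measure.restrict_apply (hT.measurable hA),
      smul_eq_mul, ← hκ]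
    congr 1
    rw [Set.image_inter hT.injective, Set.image_preimage_eq A hTsurj]
  calc ∫ x in T '' S, g x ∂μ
      = ∫ x, g x ∂(κ • Measure.map T (μ.restrict S)) := by rw [← hres]
    _ = κ.toReal • ∫ x, g x ∂(Measure.map T (μ.restrict S)) := integral_smul_measure _ _
    _ = κ.toReal * ∫ y in S, g (T y) ∂μ := by rw [hT.integral_map]; rfl

lemma epsCell_disjoint {ε : ℝ} (hε : 0 < ε) {i j : Fin d → ℤ} (hij : i ≠ j)
    {S S' : Set (EuclideanSpace ℝ (Fin d))} (hS : S ⊆ openUnitCube d)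
    (hS' : S' ⊆ openUnitCube d) :
    Disjoint (epsCell ε i S) (epsCell ε j S') := by
  rw [Set.disjoint_left]
  rintro x ⟨y, hy, rfl⟩ ⟨z, hz, hx⟩
  apply hij
  have h1 : intVec j + z = intVec i + y := smul_right_injective _ hε.ne' hx
  funext t
  have h2 : (j t : ℝ) + z t = (i t : ℝ) + y t := by
    have := congrArg (fun v : EuclideanSpace ℝ (Fin d) => v t) h1
    simpa [intVec] using this
  have hyt : y t ∈ Set.Ioo (0:ℝ) 1 := (show y.ofLp ∈ Set.univ.pi fun _ => Set.Ioo (0:ℝ) 1 from hS hy) t (Set.mem_univ t)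
  have hzt : z t ∈ Set.Ioo (0:ℝ) 1 := (show z.ofLp ∈ Set.univ.pi fun _ => Set.Ioo (0:ℝ) 1 from hS' hz) t (Set.mem_univ t)
  have h3 : |((i t - j t : ℤ) : ℝ)| < 1 := by
    push_cast
    rw [abs_lt]
    constructor <;> [linarith [hyt.1, hyt.2, hzt.1, hzt.2]; linarith [hyt.1, hyt.2, hzt.1, hzt.2]]
  have h4 : |i t - j t| < 1 := by
    have := h3
    rw [← Int.cast_abs] at this
    exact_mod_cast this
  have h5 : i t - j t = 0 := by
    rcases abs_lt.mp h4 with ⟨hl, hr⟩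
    omega
  omega

lemma abs_coord_le_norm (x : EuclideanSpace ℝ (Fin d)) (t : Fin d) : |x t| ≤ ‖x‖ := by
  rw [EuclideanSpace.norm_eq, ← Real.sqrt_sq_eq_abs]
  apply Real.sqrt_le_sqrt
  have : ‖x t‖ ^ 2 = x t ^ 2 := by rw [Real.norm_eq_abs, sq_abs]
  rw [← this]
  exact Finset.single_le_sum (fun s _ => sq_nonneg ‖x s‖) (Finset.mem_univ t)

lemma indexSet_finite {Ω : Set (EuclideanSpace ℝ (Fin d))} (hΩbdd : Bornology.IsBounded Ω)
    {ε : ℝ} (hε : 0 < ε) : (indexSet Ω ε).Finite := by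
  obtain ⟨R, hR⟩ := hΩbdd.subset_closedBall 0
  set N : ℤ := ⌈R / ε⌉ with hN
  apply Set.Finite.subset (Set.Finite.pi (fun _ : Fin d => Set.finite_Icc (-N) N))
  intro i hi
  have hmem : ε • (intVec i + (0 : EuclideanSpace ℝ (Fin d))) ∈ Ω := by
    apply hi
    exact ⟨0, (show (0 : EuclideanSpace ℝ (Fin d)).ofLp ∈ Set.univ.pi fun _ => Set.Icc (0:ℝ) 1 from fun t _ => by simp), rfl⟩
  rw [add_zero] at hmem
  have hnorm : ‖ε • intVec i‖ ≤ R := by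
    have := hR hmem
    simpa [Metric.mem_closedBall] using this
  intro t _
  have hco : |(ε • intVec i : EuclideanSpace ℝ (Fin d)) t| ≤ R :=
    le_trans (abs_coord_le_norm _ t) hnorm
  have hco2 : ε * |(i t : ℝ)| ≤ R := by
    have : (ε • intVec i : EuclideanSpace ℝ (Fin d)) t = ε * (i t : ℝ) := by simp [intVec]
    rw [this, abs_mul, abs_of_pos hε] at hco
    exact hco
  have hco3 : |(i t : ℝ)| ≤ R / ε := (le_div_iff₀ hε).mpr (by linarith [mul_comm ε |(i t : ℝ)|])
  have hco4 : |((i t : ℤ) : ℝ)| ≤ (N : ℝ) := le_trans hco3 (Int.le_ceil _)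
  have hco5 : |i t| ≤ N := by exact_mod_cast hco4
  simp only [Set.mem_Icc]
  exact abs_le.mp hco5

lemma cellMap_contDiff (ε : ℝ) (i : Fin d → ℤ) : ContDiff ℝ 1 (cellMap ε i) :=
  (contDiff_const.add contDiff_id).const_smul ε

lemma gradient_comp_cellMap {u : EuclideanSpace ℝ (Fin d) → ℝ} (hu : ContDiff ℝ 1 u)
    (ε : ℝ) (i : Fin d → ℤ) (y : EuclideanSpace ℝ (Fin d)) :
    gradient (fun z => u (cellMap ε i z)) y = ε • gradient u (cellMap ε i y) := by
  have hT : HasFDerivAt (cellMap ε i)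
      (ε • ContinuousLinearMap.id ℝ (EuclideanSpace ℝ (Fin d))) y := by
    have h1 : HasFDerivAt (fun z : EuclideanSpace ℝ (Fin d) => intVec i + z)
        (ContinuousLinearMap.id ℝ (EuclideanSpace ℝ (Fin d))) y :=
      (hasFDerivAt_id y).const_add _
    exact h1.const_smul ε
  have hdu : DifferentiableAt ℝ u (cellMap ε i y) := (hu.differentiable one_ne_zero) _
  have hg : HasGradientAt u (gradient u (cellMap ε i y)) (cellMap ε i y) :=
    hdu.hasGradientAt
  have hF := hg.hasFDerivAt.comp y hT
  have heq : ((toDual ℝ (EuclideanSpace ℝ (Fin d))) (gradient u (cellMap ε i y))).comp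
      (ε • ContinuousLinearMap.id ℝ (EuclideanSpace ℝ (Fin d)))
      = (toDual ℝ (EuclideanSpace ℝ (Fin d))) (ε • gradient u (cellMap ε i y)) := by
    ext h
    simp [real_inner_smul_left, real_inner_smul_right, mul_comm]
  rw [heq] at hF
  have : HasGradientAt (fun z => u (cellMap ε i z)) (ε • gradient u (cellMap ε i y)) y :=
    hasGradientAt_iff_hasFDerivAt.mpr hF
  exact this.gradient

lemma continuous_gradient {u : EuclideanSpace ℝ (Fin d) → ℝ} (hu : ContDiff ℝ 1 u) :
    Continuous (gradient u) := by
  have h1 : Continuous (fderiv ℝ u) := hu.continuous_fderiv one_ne_zero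
  have : gradient u = fun x => (toDual ℝ (EuclideanSpace ℝ (Fin d))).symm (fderiv ℝ u x) := rfl
  rw [this]
  exact (toDual ℝ (EuclideanSpace ℝ (Fin d))).symm.continuous.comp h1

lemma openUnitCube_subset_closed : openUnitCube d ⊆ closedUnitCube d :=
  fun x hx t ht => Set.Ioo_subset_Icc_self ((show x.ofLp ∈ Set.univ.pi fun _ => Set.Ioo (0:ℝ) 1 from hx) t ht)

lemma measurableSet_openUnitCube : MeasurableSet (openUnitCube d) :=
  MeasurableSet.preimage (MeasurableSet.univ_pi fun _ => measurableSet_Ioo) (by fun_prop)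

lemma epsCell_perfCell_subset {Ω B : Set (EuclideanSpace ℝ (Fin d))}
    (hBsub : B ⊆ openUnitCube d) {ε : ℝ} (hε : 0 < ε) {i : Fin d → ℤ}
    (hi : i ∈ indexSet Ω ε) :
    epsCell ε i (perfCell B) ⊆ perfDomain Ω B ε := by
  rintro x ⟨y, hy, rfl⟩
  refine ⟨hi ⟨y, openUnitCube_subset_closed hy.1, rfl⟩, ?_⟩
  intro hx
  simp only [Set.mem_iUnion] at hx
  obtain ⟨j, hj, hxj⟩ := hx
  by_cases hij : i = j
  · subst hij
    obtain ⟨b, hb, heq⟩ := hxj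
    have : b = y := cellMap_injective hε.ne' i heq
    exact hy.2 (this ▸ hb)
  · exact Set.disjoint_left.mp
      (epsCell_disjoint hε hij (Set.diff_subset) hBsub)
      ⟨y, hy, rfl⟩ hxj

end RT

open Set Pointwise InnerProductSpace
open scoped NNReal ENNReal

/-- **Rescaled trace inequality.** Assuming the trace inequality
`∫_{∂B} |v|² dH^{d-1} ≤ c₀ (∫_Y |v|² + ∫_Y |∇v|²)` on the reference cell, for every
`ε > 0` and every `C¹` function `u` one has
`∫_{Σ_ε} |u|² dH^{d-1} ≤ c₀ (ε⁻¹ ∫_{Ω_ε} |u|² + ε ∫_{Ω_ε} |∇u|²)`. -/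
theorem rescaled_trace_inequality
    (d : ℕ) (hd : 1 ≤ d) (Ω B : Set (EuclideanSpace ℝ (Fin d)))
    (hΩne : Ω.Nonempty) (hΩopen : IsOpen Ω) (hΩbdd : Bornology.IsBounded Ω)
    (hBcompact : IsCompact B) (hBsub : B ⊆ openUnitCube d)
    (c₀ : ℝ) (hc₀ : 0 < c₀)
    (htrace : ∀ v : EuclideanSpace ℝ (Fin d) → ℝ, ContDiff ℝ 1 v →
      ∫ x in frontier B, (v x) ^ 2 ∂(μH[(d : ℝ) - 1]) ≤
        c₀ * ((∫ x in perfCell B, (v x) ^ 2) +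
          ∫ x in perfCell B, ‖gradient v x‖ ^ 2)) :
    ∀ ε : ℝ, 0 < ε → ∀ u : EuclideanSpace ℝ (Fin d) → ℝ, ContDiff ℝ 1 u →
      ∫ x in holeBoundaries Ω B ε, (u x) ^ 2 ∂(μH[(d : ℝ) - 1]) ≤
        c₀ * (ε⁻¹ * (∫ x in perfDomain Ω B ε, (u x) ^ 2) +
          ε * ∫ x in perfDomain Ω B ε, ‖gradient u x‖ ^ 2) := by
  intro ε hε u hu
  classical
  have hd1 : (1:ℝ) ≤ (d:ℝ) := by exact_mod_cast hd
  have hs0 : (0:ℝ) ≤ (d:ℝ) - 1 := by linarith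
  have hBclosed : IsClosed B := hBcompact.isClosed
  have hfB : frontier B ⊆ openUnitCube d := hBclosed.frontier_subset.trans hBsub
  have hYsub : perfCell B ⊆ openUnitCube d := Set.diff_subset
  have hBm : MeasurableSet B := hBclosed.measurableSet
  have hYm : MeasurableSet (perfCell B) := RT.measurableSet_openUnitCube.diff hBm
  have hfBm : MeasurableSet (frontier B) := isClosed_frontier.measurableSet
  have hfin := RT.indexSet_finite hΩbdd hε
  set Fs := hfin.toFinset with hFs
  have hFsmem : ∀ i, i ∈ Fs ↔ i ∈ indexSet Ω ε := fun i => hfin.mem_toFinset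
  have hMeasCell : ∀ (i : Fin d → ℤ) (S : Set (EuclideanSpace ℝ (Fin d))),
      MeasurableSet S → MeasurableSet (epsCell ε i S) := fun i S hS =>
    (RT.cellMap_measurableEmbedding hε.ne' i).measurableSet_image.2 hS
  -- integrability on the perforated domain
  have hKcl : IsCompact (closure Ω) :=
    Metric.isCompact_of_isClosed_isBounded isClosed_closure hΩbdd.closure
  have hPsub : perfDomain Ω B ε ⊆ closure Ω := Set.diff_subset.trans subset_closure
  have hfc : Continuous fun x : EuclideanSpace ℝ (Fin d) => u x ^ 2 := hu.continuous.pow 2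
  have hgc : Continuous fun x : EuclideanSpace ℝ (Fin d) => ‖gradient u x‖ ^ 2 :=
    ((RT.continuous_gradient hu).norm).pow 2
  have hIf : IntegrableOn (fun x => u x ^ 2) (perfDomain Ω B ε) volume :=
    (hfc.continuousOn.integrableOn_compact hKcl).mono_set hPsub
  have hIg : IntegrableOn (fun x => ‖gradient u x‖ ^ 2) (perfDomain Ω B ε) volume :=
    (hgc.continuousOn.integrableOn_compact hKcl).mono_set hPsub
  have hI1 : 0 ≤ ∫ x in perfDomain Ω B ε, u x ^ 2 :=
    integral_nonneg fun x => sq_nonneg _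
  have hI2 : 0 ≤ ∫ x in perfDomain Ω B ε, ‖gradient u x‖ ^ 2 :=
    integral_nonneg fun x => sq_nonneg _
  have hεd : (0:ℝ) < ε ^ d := pow_pos hε d
  -- the per-cell inequality
  have key : ∀ i ∈ indexSet Ω ε,
      ∫ x in epsCell ε i (frontier B), u x ^ 2 ∂(μH[(d : ℝ) - 1]) ≤
        c₀ * (ε⁻¹ * (∫ x in epsCell ε i (perfCell B), u x ^ 2)
          + ε * ∫ x in epsCell ε i (perfCell B), ‖gradient u x‖ ^ 2) := by
    intro i _
    have hTemb := RT.cellMap_measurableEmbedding hε.ne' i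
    have hTsurj := RT.cellMap_surjective hε.ne' i
    have hκH : ∀ A : Set (EuclideanSpace ℝ (Fin d)), μH[(d : ℝ) - 1] (RT.cellMap ε i '' A)
        = ((‖ε‖₊ ^ ((d : ℝ) - 1) : ℝ≥0) : ℝ≥0∞) * μH[(d : ℝ) - 1] A :=
      fun A => RT.hausdorff_epsCell hε i hs0 A
    have hκV : ∀ A : Set (EuclideanSpace ℝ (Fin d)), volume (RT.cellMap ε i '' A)
        = ENNReal.ofReal (ε ^ d) * volume A := fun A => RT.volume_epsCell hε i A
    have htrH : (((‖ε‖₊ ^ ((d : ℝ) - 1) : ℝ≥0) : ℝ≥0∞)).toReal = ε ^ ((d : ℝ) - 1) := by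
      rw [ENNReal.coe_toReal, NNReal.coe_rpow, coe_nnnorm, Real.norm_eq_abs, abs_of_pos hε]
    have htrV : (ENNReal.ofReal (ε ^ d)).toReal = ε ^ d := ENNReal.toReal_ofReal hεd.le
    set v : EuclideanSpace ℝ (Fin d) → ℝ := fun y => u (RT.cellMap ε i y) with hv
    have hvc : ContDiff ℝ 1 v := hu.comp (RT.cellMap_contDiff ε i)
    -- the three change-of-variable identities
    have hL : ∫ x in epsCell ε i (frontier B), u x ^ 2 ∂(μH[(d : ℝ) - 1])
        = ε ^ ((d : ℝ) - 1) * ∫ y in frontier B, v y ^ 2 ∂(μH[(d : ℝ) - 1]) := by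
      have := RT.setIntegral_image_aux (μH[(d : ℝ) - 1]) hTemb hTsurj hκH (frontier B)
        (fun x => u x ^ 2)
      rw [htrH] at this
      exact this
    have hVa : ∫ x in epsCell ε i (perfCell B), u x ^ 2
        = ε ^ d * ∫ y in perfCell B, v y ^ 2 := by
      have := RT.setIntegral_image_aux volume hTemb hTsurj hκV (perfCell B)
        (fun x => u x ^ 2)
      rw [htrV] at this
      exact this
    have hVb : ∫ x in epsCell ε i (perfCell B), ‖gradient u x‖ ^ 2
        = ε ^ d * ∫ y in perfCell B, ‖gradient u (RT.cellMap ε i y)‖ ^ 2 := by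
      have := RT.setIntegral_image_aux volume hTemb hTsurj hκV (perfCell B)
        (fun x => ‖gradient u x‖ ^ 2)
      rw [htrV] at this
      exact this
    have hgr : ∀ y, ‖gradient v y‖ ^ 2 = ε ^ 2 * ‖gradient u (RT.cellMap ε i y)‖ ^ 2 := by
      intro y
      rw [hv]
      rw [RT.gradient_comp_cellMap hu ε i y, norm_smul, Real.norm_eq_abs, mul_pow, sq_abs]
    have hgreq : ∫ y in perfCell B, ‖gradient v y‖ ^ 2
        = ε ^ 2 * ∫ y in perfCell B, ‖gradient u (RT.cellMap ε i y)‖ ^ 2 := by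
      simp_rw [hgr]
      exact integral_const_mul _ _
    have htr := htrace v hvc
    have hrp : ε ^ ((d : ℝ) - 1) = ε ^ d / ε := by
      rw [Real.rpow_sub hε, Real.rpow_one, Real.rpow_natCast]
    calc ∫ x in epsCell ε i (frontier B), u x ^ 2 ∂(μH[(d : ℝ) - 1])
        = (ε ^ d / ε) * ∫ y in frontier B, v y ^ 2 ∂(μH[(d : ℝ) - 1]) := by
          rw [hL, hrp]
      _ ≤ (ε ^ d / ε) * (c₀ * ((∫ y in perfCell B, v y ^ 2)
            + ∫ y in perfCell B, ‖gradient v y‖ ^ 2)) :=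
          mul_le_mul_of_nonneg_left htr (div_pos hεd hε).le
      _ = c₀ * (ε⁻¹ * (∫ x in epsCell ε i (perfCell B), u x ^ 2)
            + ε * ∫ x in epsCell ε i (perfCell B), ‖gradient u x‖ ^ 2) := by
          rw [hgreq, hVa, hVb]
          field_simp
  -- rewrite the union over the finite index set
  have hSigEq : holeBoundaries Ω B ε = ⋃ i ∈ Fs, epsCell ε i (frontier B) := by
    ext x
    simp [holeBoundaries, hFsmem]
  by_cases hInt : IntegrableOn (fun x => u x ^ 2) (holeBoundaries Ω B ε) (μH[(d : ℝ) - 1])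
  · rw [hSigEq] at hInt ⊢
    have hdisjF : (↑Fs : Set (Fin d → ℤ)).Pairwise
        (Function.onFun Disjoint fun i => epsCell ε i (frontier B)) :=
      fun i _ j _ hij => RT.epsCell_disjoint hε hij hfB hfB
    have hdisjY : (↑Fs : Set (Fin d → ℤ)).Pairwise
        (Function.onFun Disjoint fun i => epsCell ε i (perfCell B)) :=
      fun i _ j _ hij => RT.epsCell_disjoint hε hij hYsub hYsub
    have hUsub : (⋃ i ∈ Fs, epsCell ε i (perfCell B)) ⊆ perfDomain Ω B ε := by
      intro x hx
      simp only [Set.mem_iUnion] at hx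
      obtain ⟨i, hi, hxi⟩ := hx
      exact RT.epsCell_perfCell_subset hBsub hε ((hFsmem i).1 hi) hxi
    have hcellsubU : ∀ i ∈ Fs, epsCell ε i (perfCell B) ⊆ ⋃ j ∈ Fs, epsCell ε j (perfCell B) := by
      intro i hi x hx
      simp only [Set.mem_iUnion]
      exact ⟨i, hi, hx⟩
    have hsum1 : ∫ x in ⋃ i ∈ Fs, epsCell ε i (frontier B), u x ^ 2 ∂(μH[(d : ℝ) - 1])
        = ∑ i ∈ Fs, ∫ x in epsCell ε i (frontier B), u x ^ 2 ∂(μH[(d : ℝ) - 1]) := by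
      apply integral_biUnion_finset Fs (fun i _ => hMeasCell i _ hfBm) hdisjF
      intro i hi
      apply hInt.mono_set
      intro x hx
      simp only [Set.mem_iUnion]
      exact ⟨i, hi, hx⟩
    have hsum2 : ∫ x in ⋃ i ∈ Fs, epsCell ε i (perfCell B), u x ^ 2
        = ∑ i ∈ Fs, ∫ x in epsCell ε i (perfCell B), u x ^ 2 :=
      integral_biUnion_finset Fs (fun i _ => hMeasCell i _ hYm) hdisjY
        (fun i hi => hIf.mono_set ((hcellsubU i hi).trans hUsub))
    have hsum3 : ∫ x in ⋃ i ∈ Fs, epsCell ε i (perfCell B), ‖gradient u x‖ ^ 2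
        = ∑ i ∈ Fs, ∫ x in epsCell ε i (perfCell B), ‖gradient u x‖ ^ 2 :=
      integral_biUnion_finset Fs (fun i _ => hMeasCell i _ hYm) hdisjY
        (fun i hi => hIg.mono_set ((hcellsubU i hi).trans hUsub))
    have hA : ∑ i ∈ Fs, ∫ x in epsCell ε i (perfCell B), u x ^ 2
        ≤ ∫ x in perfDomain Ω B ε, u x ^ 2 := by
      rw [← hsum2]
      exact setIntegral_mono_set hIf
        (Filter.Eventually.of_forall fun x => sq_nonneg _)
        (HasSubset.Subset.eventuallyLE hUsub)
    have hB : ∑ i ∈ Fs, ∫ x in epsCell ε i (perfCell B), ‖gradient u x‖ ^ 2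
        ≤ ∫ x in perfDomain Ω B ε, ‖gradient u x‖ ^ 2 := by
      rw [← hsum3]
      exact setIntegral_mono_set hIg
        (Filter.Eventually.of_forall fun x => sq_nonneg _)
        (HasSubset.Subset.eventuallyLE hUsub)
    have hAnn : 0 ≤ ∑ i ∈ Fs, ∫ x in epsCell ε i (perfCell B), u x ^ 2 :=
      Finset.sum_nonneg fun i _ => integral_nonneg fun x => sq_nonneg _
    have hBnn : 0 ≤ ∑ i ∈ Fs, ∫ x in epsCell ε i (perfCell B), ‖gradient u x‖ ^ 2 :=
      Finset.sum_nonneg fun i _ => integral_nonneg fun x => sq_nonneg _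
    calc ∫ x in ⋃ i ∈ Fs, epsCell ε i (frontier B), u x ^ 2 ∂(μH[(d : ℝ) - 1])
        = ∑ i ∈ Fs, ∫ x in epsCell ε i (frontier B), u x ^ 2 ∂(μH[(d : ℝ) - 1]) := hsum1
      _ ≤ ∑ i ∈ Fs, c₀ * (ε⁻¹ * (∫ x in epsCell ε i (perfCell B), u x ^ 2)
            + ε * ∫ x in epsCell ε i (perfCell B), ‖gradient u x‖ ^ 2) :=
          Finset.sum_le_sum fun i hi => key i ((hFsmem i).1 hi)
      _ = c₀ * (ε⁻¹ * (∑ i ∈ Fs, ∫ x in epsCell ε i (perfCell B), u x ^ 2)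
            + ε * ∑ i ∈ Fs, ∫ x in epsCell ε i (perfCell B), ‖gradient u x‖ ^ 2) := by
          rw [← Finset.mul_sum, Finset.sum_add_distrib, ← Finset.mul_sum, ← Finset.mul_sum]
      _ ≤ c₀ * (ε⁻¹ * (∫ x in perfDomain Ω B ε, u x ^ 2)
            + ε * ∫ x in perfDomain Ω B ε, ‖gradient u x‖ ^ 2) := by
          apply mul_le_mul_of_nonneg_left _ hc₀.le
          exact add_le_add (mul_le_mul_of_nonneg_left hA (inv_nonneg.2 hε.le))
            (mul_le_mul_of_nonneg_left hB hε.le)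
  · rw [integral_undef hInt]
    have : 0 ≤ c₀ * (ε⁻¹ * (∫ x in perfDomain Ω B ε, u x ^ 2)
        + ε * ∫ x in perfDomain Ω B ε, ‖gradient u x‖ ^ 2) :=
      mul_nonneg hc₀.le (add_nonneg (mul_nonneg (inv_nonneg.2 hε.le) hI1)
        (mul_nonneg hε.le hI2))
    exact this

end
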